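/- If x is a vertex of a finite connected simple graph G, then gp(G − x) ≤ 2 · gp(G), where G − x is the subgraph of G induced by V(G) ∖ {x}. -/
import Mathlib

open SimpleGraph

variable {V : Type*}

/-- `S` is a general position set of `G`: no three pairwise distinct vertices of `S`
(lying in a common component) lie on a common shortest path, i.e. no `v ∈ S` lies
strictly between `u, w ∈ S`. -/
def IsGPSet (G : SimpleGraph V) (S : Set V) : Prop :=
  ∀ u ∈ S, ∀ v ∈ S, ∀ w ∈ S, u ≠ v → v ≠ w → u ≠ w →
    ¬(G.Reachable u w ∧ G.dist u v + G.dist v w = G.dist u w)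

/-- The general position number of `G`. -/
noncomputable def gpNum (G : SimpleGraph V) [Fintype V] : ℕ :=
  sSup {n | ∃ S : Finset V, IsGPSet G ↑S ∧ S.card = n}

/-- The vertex-deleted subgraph `G - x`, induced on the vertices distinct from `x`. -/
def deleteVertex (G : SimpleGraph V) (x : V) : SimpleGraph {v : V // v ≠ x} :=
  G.comap Subtype.val

namespace GPAux

variable {G : SimpleGraph V} {x : V}

/-- The embedding homomorphism from `G - x` to `G`. -/
def homDel (G : SimpleGraph V) (x : V) : deleteVertex G x →g G :=
  ⟨Subtype.val, fun h => h⟩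

lemma dist_le_del {u v : {v : V // v ≠ x}} (h : (deleteVertex G x).Reachable u v) :
    G.dist u.val v.val ≤ (deleteVertex G x).dist u v := by
  obtain ⟨p, hp⟩ := h.exists_walk_length_eq_dist
  calc G.dist u.val v.val ≤ (p.map (homDel G x)).length := SimpleGraph.dist_le _
    _ = p.length := Walk.length_map _ _
    _ = _ := hp

lemma lift_walk {a b : V} (p : G.Walk a b) :
    ∀ (ha : a ≠ x) (hb : b ≠ x), x ∉ p.support →
      ∃ q : (deleteVertex G x).Walk ⟨a, ha⟩ ⟨b, hb⟩, q.length = p.length := by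
  induction p with
  | nil => exact fun ha hb _ => ⟨Walk.nil, rfl⟩
  | @cons a c b h p ih =>
    intro ha hb hx
    simp only [Walk.support_cons, List.mem_cons, not_or] at hx
    have hc : c ≠ x := fun he => hx.2 (he ▸ p.start_mem_support)
    obtain ⟨q, hq⟩ := ih hc hb hx.2
    exact ⟨Walk.cons (show (deleteVertex G x).Adj ⟨a, ha⟩ ⟨c, hc⟩ from h) q, by
      simp [Walk.length_cons, hq]⟩

lemma lift_walk' {u v : {v : V // v ≠ x}} (p : G.Walk u.val v.val) (hx : x ∉ p.support) :
    ∃ q : (deleteVertex G x).Walk u v, q.length = p.length := by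
  obtain ⟨a, ha⟩ := u
  obtain ⟨b, hb⟩ := v
  exact lift_walk p ha hb hx

lemma dist_split [DecidableEq V] (hG : G.Connected) {u v : V} (p : G.Walk u v) (hp : p.length = G.dist u v)
    (hx : x ∈ p.support) : G.dist u v = G.dist u x + G.dist x v := by
  have h1 : G.dist u x ≤ (p.takeUntil x hx).length := SimpleGraph.dist_le _
  have h2 : G.dist x v ≤ (p.dropUntil x hx).length := SimpleGraph.dist_le _
  have h3 : (p.takeUntil x hx).length + (p.dropUntil x hx).length = p.length := by
    rw [← Walk.length_append, Walk.take_spec]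
  have h4 : G.dist u v ≤ G.dist u x + G.dist x v := hG.dist_triangle
  omega

lemma geo_dichotomy [DecidableEq V] (hG : G.Connected) (u v : V) :
    (∃ p : G.Walk u v, p.length = G.dist u v ∧ x ∉ p.support) ∨
      G.dist u v = G.dist u x + G.dist x v := by
  obtain ⟨p, hp⟩ := (hG.preconnected u v).exists_walk_length_eq_dist
  by_cases hx : x ∈ p.support
  · exact Or.inr (dist_split hG p hp hx)
  · exact Or.inl ⟨p, hp, hx⟩

lemma bothA {S : Finset {v : V // v ≠ x}} (hS : IsGPSet (deleteVertex G x) ↑S)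
    {u v w : {v : V // v ≠ x}}
    (hu : u ∈ S) (hv : v ∈ S) (hw : w ∈ S) (huv : u ≠ v) (hvw : v ≠ w) (huw : u ≠ w)
    (hcol : G.dist u.val v.val + G.dist v.val w.val = G.dist u.val w.val)
    {p : G.Walk u.val v.val} (hp : p.length = G.dist u.val v.val) (hpx : x ∉ p.support)
    {q : G.Walk v.val w.val} (hq : q.length = G.dist v.val w.val) (hqx : x ∉ q.support) :
    False := by
  obtain ⟨p'', hp'⟩ := lift_walk' p hpx
  obtain ⟨q'', hq'⟩ := lift_walk' q hqx
  have hp'' : p''.length = G.dist u.val v.val := by rw [hp', hp]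
  have hq'' : q''.length = G.dist v.val w.val := by rw [hq', hq]
  have e1 : (deleteVertex G x).dist u v = G.dist u.val v.val :=
    le_antisymm (hp'' ▸ SimpleGraph.dist_le p'') (dist_le_del ⟨p''⟩)
  have e2 : (deleteVertex G x).dist v w = G.dist v.val w.val :=
    le_antisymm (hq'' ▸ SimpleGraph.dist_le q'') (dist_le_del ⟨q''⟩)
  have e3 : (deleteVertex G x).dist u w = G.dist u.val w.val := by
    refine le_antisymm ?_ (dist_le_del ⟨p''.append q''⟩)
    calc (deleteVertex G x).dist u w ≤ (p''.append q'').length := SimpleGraph.dist_le _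
      _ = p''.length + q''.length := Walk.length_append _ _
      _ = G.dist u.val w.val := by rw [hp'', hq'', hcol]
  exact hS u (Finset.mem_coe.mpr hu) v (Finset.mem_coe.mpr hv) w (Finset.mem_coe.mpr hw)
    huv hvw huw ⟨⟨p''.append q''⟩, by rw [e1, e2, e3, hcol]⟩

lemma middle [DecidableEq V] (hG : G.Connected) {S : Finset {v : V // v ≠ x}}
    (hS : IsGPSet (deleteVertex G x) ↑S) {u v w : {v : V // v ≠ x}}
    (hu : u ∈ S) (hv : v ∈ S) (hw : w ∈ S) (huv : u ≠ v) (hvw : v ≠ w) (huw : u ≠ w)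
    (hcol : G.dist u.val v.val + G.dist v.val w.val = G.dist u.val w.val) :
    G.dist x u.val = G.dist x v.val + G.dist v.val u.val ∨
      G.dist x w.val = G.dist x v.val + G.dist v.val w.val := by
  rcases geo_dichotomy (x := x) hG u.val v.val with ⟨p, hp, hpx⟩ | hd1
  · rcases geo_dichotomy (x := x) hG v.val w.val with ⟨q, hq, hqx⟩ | hd2
    · exact absurd (bothA hS hu hv hw huv hvw huw hcol hp hpx hq hqx) (by simp)
    · -- every v-w geodesic passes x : deduce v between x and u
      left
      have c1 : G.dist v.val x = G.dist x v.val := SimpleGraph.dist_comm ..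
      have c2 : G.dist v.val u.val = G.dist u.val v.val := SimpleGraph.dist_comm ..
      have t1 : G.dist u.val w.val ≤ G.dist u.val x + G.dist x w.val := hG.dist_triangle
      have t2 : G.dist x u.val ≤ G.dist x v.val + G.dist v.val u.val := hG.dist_triangle
      have c3 : G.dist u.val x = G.dist x u.val := SimpleGraph.dist_comm ..
      omega
  · -- every u-v geodesic passes x : deduce v between x and w
    right
    have c1 : G.dist u.val x = G.dist x u.val := SimpleGraph.dist_comm ..
    have t1 : G.dist u.val w.val ≤ G.dist u.val x + G.dist x w.val := hG.dist_triangle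
    have t2 : G.dist x w.val ≤ G.dist x v.val + G.dist v.val w.val := hG.dist_triangle
    omega

lemma no_chain [DecidableEq V] (hG : G.Connected) {S : Finset {v : V // v ≠ x}}
    (hS : IsGPSet (deleteVertex G x) ↑S) {v w z : {v : V // v ≠ x}}
    (hv : v ∈ S) (hw : w ∈ S) (hz : z ∈ S) (hvw : v ≠ w) (hwz : w ≠ z)
    (h1 : G.dist x w.val = G.dist x v.val + G.dist v.val w.val)
    (h2 : G.dist x z.val = G.dist x w.val + G.dist w.val z.val) : False := by
  have posv : 0 < G.dist x v.val := hG.pos_dist_of_ne (Ne.symm v.prop)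
  have posw : 0 < G.dist x w.val := hG.pos_dist_of_ne (Ne.symm w.prop)
  have posvw : 0 < G.dist v.val w.val :=
    (hG.preconnected v.val w.val).pos_dist_of_ne (fun h => hvw (Subtype.ext h))
  have t1 : G.dist x z.val ≤ G.dist x v.val + G.dist v.val z.val := hG.dist_triangle
  have t2 : G.dist v.val z.val ≤ G.dist v.val w.val + G.dist w.val z.val := hG.dist_triangle
  have hcol : G.dist v.val w.val + G.dist w.val z.val = G.dist v.val z.val := by omega
  have hvz : v ≠ z := by
    intro h
    subst h
    have c : G.dist w.val v.val = G.dist v.val w.val := SimpleGraph.dist_comm ..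
    omega
  rcases geo_dichotomy (x := x) hG v.val w.val with ⟨p, hp, hpx⟩ | hd1
  · rcases geo_dichotomy (x := x) hG w.val z.val with ⟨q, hq, hqx⟩ | hd2
    · exact bothA hS hv hw hz hvw hwz hvz hcol hp hpx hq hqx
    · have c1 : G.dist w.val x = G.dist x w.val := SimpleGraph.dist_comm ..
      omega
  · have c1 : G.dist v.val x = G.dist x v.val := SimpleGraph.dist_comm ..
    omega

end GPAux

open GPAux in
theorem gp_deleteVertex_le [Fintype V] [DecidableEq V] (G : SimpleGraph V)
    (hG : G.Connected) (x : V) :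
    gpNum (deleteVertex G x) ≤ 2 * gpNum G := by
  classical
  have hbdd : BddAbove {n | ∃ S : Finset V, IsGPSet G ↑S ∧ S.card = n} := by
    refine ⟨Fintype.card V, ?_⟩
    rintro n ⟨S, -, hc⟩
    exact hc ▸ S.card_le_univ
  have hle : ∀ T : Finset V, IsGPSet G ↑T → T.card ≤ gpNum G :=
    fun T hT => le_csSup hbdd ⟨T, hT, rfl⟩
  have key : ∀ S : Finset {v : V // v ≠ x}, IsGPSet (deleteVertex G x) ↑S →
      S.card ≤ 2 * gpNum G := by
    intro S hS
    set P : {v : V // v ≠ x} → Prop := fun v => ∃ u ∈ S, v ≠ u ∧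
        G.dist x u.val = G.dist x v.val + G.dist v.val u.val with hPdef
    have S1gp : IsGPSet G ↑((S.filter fun v => ¬ P v).image Subtype.val) := by
      intro a ha b hb c hc hab hbc hac hbad
      simp only [Finset.coe_image, Set.mem_image, Finset.mem_coe, Finset.mem_filter] at ha hb hc
      obtain ⟨a', ⟨ha'S, -⟩, rfl⟩ := ha
      obtain ⟨b', ⟨hb'S, hb'P⟩, rfl⟩ := hb
      obtain ⟨c', ⟨hc'S, -⟩, rfl⟩ := hc
      have h1 : a' ≠ b' := fun h => hab (congrArg Subtype.val h)
      have h2 : b' ≠ c' := fun h => hbc (congrArg Subtype.val h)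
      have h3 : a' ≠ c' := fun h => hac (congrArg Subtype.val h)
      rcases middle hG hS ha'S hb'S hc'S h1 h2 h3 hbad.2 with hrel | hrel
      · exact hb'P ⟨a', ha'S, h1.symm, hrel⟩
      · exact hb'P ⟨c', hc'S, h2, hrel⟩
    have S2gp : IsGPSet G ↑((S.filter P).image Subtype.val) := by
      intro a ha b hb c hc hab hbc hac hbad
      simp only [Finset.coe_image, Set.mem_image, Finset.mem_coe, Finset.mem_filter] at ha hb hc
      obtain ⟨a', ⟨ha'S, ha'P⟩, rfl⟩ := ha
      obtain ⟨b', ⟨hb'S, -⟩, rfl⟩ := hb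
      obtain ⟨c', ⟨hc'S, hc'P⟩, rfl⟩ := hc
      have h1 : a' ≠ b' := fun h => hab (congrArg Subtype.val h)
      have h2 : b' ≠ c' := fun h => hbc (congrArg Subtype.val h)
      have h3 : a' ≠ c' := fun h => hac (congrArg Subtype.val h)
      rcases middle hG hS ha'S hb'S hc'S h1 h2 h3 hbad.2 with hrel | hrel
      · obtain ⟨z, hzS, haz, hrz⟩ := ha'P
        exact no_chain hG hS hb'S ha'S hzS h1.symm haz hrel hrz
      · obtain ⟨z, hzS, hcz, hrz⟩ := hc'P
        exact no_chain hG hS hb'S hc'S hzS h2 hcz hrel hrz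
    have hc1 : ((S.filter fun v => ¬ P v).image Subtype.val).card
        = (S.filter fun v => ¬ P v).card :=
      Finset.card_image_of_injective _ Subtype.val_injective
    have hc2 : ((S.filter P).image Subtype.val).card = (S.filter P).card :=
      Finset.card_image_of_injective _ Subtype.val_injective
    have hsum : (S.filter P).card + (S.filter fun v => ¬ P v).card = S.card :=
      Finset.card_filter_add_card_filter_not P
    have l1 := hle _ S1gp
    have l2 := hle _ S2gp
    omega
  have hne : (0 : ℕ) ∈ {n | ∃ S : Finset {v : V // v ≠ x},
      IsGPSet (deleteVertex G x) ↑S ∧ S.card = n} := by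
    refine ⟨∅, ?_, Finset.card_empty⟩
    intro u hu
    simp at hu
  refine csSup_le ⟨0, hne⟩ ?_
  rintro n ⟨S, hSgp, rfl⟩
  exact key S hSgp
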